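/- Let S be a closed convex subset of ℝ^m with nonempty interior, equipped with an affine preorder ≿. Suppose f : S → ℝ is 1-Lipschitz and ≿-increasing, f is differentiable at an interior point z ∈ S with derivative (gradient) g, and f(z) = 0 after translating so z = 0. Then the linear function x ↦ g·x restricted to S is ≿-increasing. -/
import Mathlib

open Filter Topology


theorem stmt16 {m : ℕ}
    (S : Set (EuclideanSpace ℝ (Fin m)))
    (hclosed : IsClosed S) (hconv : Convex ℝ S)
    (hz : (0 : EuclideanSpace ℝ (Fin m)) ∈ interior S)
    (R : EuclideanSpace ℝ (Fin m) → EuclideanSpace ℝ (Fin m) → Prop)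
    (hrefl : ∀ p ∈ S, R p p)
    (htrans : ∀ p ∈ S, ∀ q ∈ S, ∀ r ∈ S, R p q → R q r → R p r)
    -- affinity of the preorder on S:
    (haff : ∀ p ∈ S, ∀ q ∈ S, ∀ r ∈ S, ∀ lam : ℝ, 0 ≤ lam → lam < 1 →
      (R p q ↔ R ((1 - lam) • p + lam • r) ((1 - lam) • q + lam • r)))
    (f : EuclideanSpace ℝ (Fin m) → ℝ)
    (hf1 : LipschitzOnWith 1 f S)
    (hfinc : ∀ x ∈ S, ∀ y ∈ S, R x y → f y ≤ f x)
    (g : EuclideanSpace ℝ (Fin m) →L[ℝ] ℝ)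
    (hdiff : HasFDerivAt f g 0) (hf0 : f 0 = 0) :
    ∀ x ∈ S, ∀ y ∈ S, R x y → g y ≤ g x := by
  intro x hx y hy hR
  have h0S : (0 : EuclideanSpace ℝ (Fin m)) ∈ S := interior_subset hz
  have mem : ∀ t : ℝ, 0 ≤ t → t ≤ 1 → ∀ p ∈ S, t • p ∈ S := by
    intro t ht ht1 p hp
    have := hconv h0S hp (show (0:ℝ) ≤ 1 - t by linarith) ht (by ring)
    simpa using this
  have key : ∀ t : ℝ, 0 < t → t < 1 → f (t • y) ≤ f (t • x) := by
    intro t ht ht1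
    have h := (haff x hx y hy 0 h0S (1 - t) (by linarith) (by linarith)).mp hR
    have e : (1 : ℝ) - (1 - t) = t := by ring
    rw [e, smul_zero, add_zero, add_zero] at h
    exact hfinc _ (mem t ht.le ht1.le x hx) _ (mem t ht.le ht1.le y hy) h
  -- derivative of t ↦ f (t • v) at 0 is g v
  have deriv : ∀ v : EuclideanSpace ℝ (Fin m),
      Tendsto (fun t : ℝ => f (t • v) / t) (nhdsWithin 0 (Set.Ioi 0)) (nhds (g v)) := by
    intro v
    have hc : HasDerivAt (fun t : ℝ => t • v) v 0 := by
      simpa using (hasDerivAt_id (0 : ℝ)).smul_const v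
    have hd : HasDerivAt (fun t : ℝ => f (t • v)) (g v) 0 := by
      have h0 : HasFDerivAt f g ((fun t : ℝ => t • v) 0) := by simpa using hdiff
      exact h0.comp_hasDerivAt 0 hc
    have := hasDerivAt_iff_tendsto_slope.mp hd
    have h2 : Tendsto (slope (fun t : ℝ => f (t • v)) 0) (nhdsWithin 0 (Set.Ioi 0))
        (nhds (g v)) :=
      this.mono_left (nhdsWithin_mono _ (fun t ht => ne_of_gt ht))
    refine h2.congr' ?_
    filter_upwards [self_mem_nhdsWithin] with t ht
    have ht' : (t : ℝ) ≠ 0 := ne_of_gt ht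
    simp [slope_def_field, hf0, div_eq_div_iff, ht']
  have hlim : Tendsto (fun t : ℝ => f (t • x) / t - f (t • y) / t)
      (nhdsWithin 0 (Set.Ioi 0)) (nhds (g x - g y)) := (deriv x).sub (deriv y)
  have hineq : ∀ᶠ t in nhdsWithin (0:ℝ) (Set.Ioi 0),
      0 ≤ f (t • x) / t - f (t • y) / t := by
    have hIoo : Set.Ioo (0:ℝ) 1 ∈ nhdsWithin (0:ℝ) (Set.Ioi 0) :=
      Ioo_mem_nhdsGT_of_mem ⟨le_refl 0, one_pos⟩
    filter_upwards [hIoo] with t ht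
    exact sub_nonneg.mpr ((div_le_div_iff_of_pos_right ht.1).mpr (key t ht.1 ht.2))
  have : (0:ℝ) ≤ g x - g y := ge_of_tendsto hlim hineq
  linarith
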